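/- Let X̂_σ : H⊕H → H⊕H denote the operator (v₀, v₁) ↦ (v₁, v₀) (the action of σ_X ⊗ 1 under the identification ℂ²⊗H ≅ H⊕H). Then for every vector ψ ∈ H, ‖V X̃ ψ − X̂_σ V ψ‖² = ‖(P⁰X̃ − X̃P¹)ψ‖² + ‖(P¹X̃ − X̃P⁰)ψ‖². -/

import Mathlib

/-- The projection `P⁰ = (1 + Z̃)/2`. -/
noncomputable def Pb0 {H : Type*} [AddCommGroup H] [Module ℂ H]
    (Zt : H →ₗ[ℂ] H) : H →ₗ[ℂ] H := ((1 : ℂ) / 2) • (1 + Zt)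

/-- The projection `P¹ = (1 − Z̃)/2`. -/
noncomputable def Pb1 {H : Type*} [AddCommGroup H] [Module ℂ H]
    (Zt : H →ₗ[ℂ] H) : H →ₗ[ℂ] H := ((1 : ℂ) / 2) • (1 - Zt)

/-- The SWAP-gate map `V : H → H⊕H`, `Vψ = (P⁰ψ, X̃P¹ψ)`. -/
noncomputable def VL {H : Type*} [AddCommGroup H] [Module ℂ H]
    (Zt Xt : H →ₗ[ℂ] H) : H →ₗ[ℂ] WithLp 2 (H × H) :=
  (WithLp.linearEquiv 2 ℂ (H × H)).symm.toLinearMap ∘ₗ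
    LinearMap.prod (Pb0 Zt) (Xt ∘ₗ Pb1 Zt)

/-- The operator `σ_X ⊗ 1` on `H⊕H`: `(v₀, v₁) ↦ (v₁, v₀)`. -/
noncomputable def Xsig {H : Type*} [AddCommGroup H] [Module ℂ H] :
    WithLp 2 (H × H) →ₗ[ℂ] WithLp 2 (H × H) :=
  (WithLp.linearEquiv 2 ℂ (H × H)).symm.toLinearMap ∘ₗ
    LinearMap.prod (LinearMap.snd ℂ H H) (LinearMap.fst ℂ H H) ∘ₗ
      (WithLp.linearEquiv 2 ℂ (H × H)).toLinearMap

/-- For every `ψ ∈ H`,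
`‖V X̃ ψ − (σ_X ⊗ 1) V ψ‖² = ‖(P⁰X̃ − X̃P¹)ψ‖² + ‖(P¹X̃ − X̃P⁰)ψ‖²`. -/
theorem swap_isometry_X_intertwine {H : Type*} [NormedAddCommGroup H]
    [InnerProductSpace ℂ H] [FiniteDimensional ℂ H]
    (Zt Xt : H →ₗ[ℂ] H) (hZt : Zt.IsSymmetric) (hXt : Xt.IsSymmetric)
    (hZsq : Zt * Zt = 1) (hXsq : Xt * Xt = 1) (ψ : H) :
    ‖VL Zt Xt (Xt ψ) - Xsig (VL Zt Xt ψ)‖ ^ 2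
      = ‖(Pb0 Zt * Xt - Xt * Pb1 Zt) ψ‖ ^ 2 + ‖(Pb1 Zt * Xt - Xt * Pb0 Zt) ψ‖ ^ 2 := by
  have hXX : ∀ w : H, Xt (Xt w) = w := by
    intro w
    have := congrArg (fun T : H →ₗ[ℂ] H => T w) hXsq
    simpa [Module.End.mul_apply] using this
  have hXn : ∀ v : H, ‖Xt v‖ = ‖v‖ := by
    intro v
    have h : (inner ℂ (Xt v) (Xt v) : ℂ) = inner ℂ v v := by
      rw [hXt v (Xt v), hXX]
    rw [inner_self_eq_norm_sq_to_K, inner_self_eq_norm_sq_to_K] at h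
    have h2 : (‖Xt v‖ : ℝ) ^ 2 = ‖v‖ ^ 2 := by exact_mod_cast h
    nlinarith [norm_nonneg (Xt v), norm_nonneg v]
  set D := VL Zt Xt (Xt ψ) - Xsig (VL Zt Xt ψ) with hD
  have h1 : D.fst = (Pb0 Zt * Xt - Xt * Pb1 Zt) ψ := by
    simp [hD, VL, Xsig, Module.End.mul_apply]
  have h2 : D.snd = Xt ((Pb1 Zt * Xt - Xt * Pb0 Zt) ψ) := by
    simp [hD, VL, Xsig, Module.End.mul_apply, hXX]
  rw [WithLp.prod_norm_sq_eq_of_L2, h1, h2, hXn]
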